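/- Every element of the group T'_{8·3^q} can be written uniquely in the form b^s w^t or b^s a w^t with 0 ≤ s < 4 and 0 ≤ t < 3^q; in particular the group has order 8·3^q. -/

import Mathlib

/-- Relations of the generalized binary tetrahedral group
`T'_{8·3^q} = ⟨b, a, w | a² = b² = (ab)², a⁴ = w^{3^q} = 1, wa = bw, wb = abw⟩`,
with `b` the letter `0`, `a` the letter `1` and `w` the letter `2`. -/
def TprimeRels (q : ℕ) : Set (FreeGroup (Fin 3)) :=
  { (FreeGroup.of 1) ^ 2 * ((FreeGroup.of 0) ^ 2)⁻¹,
    (FreeGroup.of 1) ^ 2 * ((FreeGroup.of 1 * FreeGroup.of 0) ^ 2)⁻¹,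
    (FreeGroup.of 1) ^ 4,
    (FreeGroup.of 2) ^ (3 ^ q),
    (FreeGroup.of 2 * FreeGroup.of 1) * (FreeGroup.of 0 * FreeGroup.of 2)⁻¹,
    (FreeGroup.of 2 * FreeGroup.of 0) *
      (FreeGroup.of 1 * FreeGroup.of 0 * FreeGroup.of 2)⁻¹ }

/-- The generalized binary tetrahedral group `T'_{8·3^q}`. -/
abbrev Tprime (q : ℕ) := PresentedGroup (TprimeRels q)

/-- The generator `b` of `T'_{8·3^q}`. -/
def Tprime.b (q : ℕ) : Tprime q := PresentedGroup.of 0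

/-- The generator `a` of `T'_{8·3^q}`. -/
def Tprime.a (q : ℕ) : Tprime q := PresentedGroup.of 1

/-- The generator `w` of `T'_{8·3^q}`. -/
def Tprime.w (q : ℕ) : Tprime q := PresentedGroup.of 2

namespace NFAux

abbrev M3 := Matrix (Fin 2) (Fin 2) (ZMod 3)

def AU : M3ˣ := ⟨!![0, 2; 1, 0], !![0, 1; 2, 0], by decide, by decide⟩
def BU : M3ˣ := ⟨!![1, 1; 1, 2], !![2, 2; 2, 1], by decide, by decide⟩
def WU : M3ˣ := ⟨!![1, 1; 0, 1], !![1, 2; 0, 1], by decide, by decide⟩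

example : WU ^ 3 = 1 := by decide
example : AU ^ 2 = BU ^ 2 := by decide
example : ∀ s s' : Fin 4, ∀ e e' : Fin 2,
    BU ^ (s : ℕ) * AU ^ (e : ℕ) = BU ^ (s' : ℕ) * AU ^ (e' : ℕ) → s = s' ∧ e = e' := by decide

end NFAux

namespace NFAux

def fgen1 : Fin 3 → M3ˣ
  | 0 => BU
  | 1 => AU
  | 2 => WU

@[simp] lemma fgen1_0 : fgen1 0 = BU := rfl
@[simp] lemma fgen1_1 : fgen1 1 = AU := rfl
@[simp] lemma fgen1_2 : fgen1 2 = WU := rfl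

def fgen2 (q : ℕ) : Fin 3 → Multiplicative (ZMod (3 ^ q))
  | 0 => 1
  | 1 => 1
  | 2 => Multiplicative.ofAdd 1

@[simp] lemma fgen2_0 (q : ℕ) : fgen2 q 0 = 1 := rfl
@[simp] lemma fgen2_1 (q : ℕ) : fgen2 q 1 = 1 := rfl
@[simp] lemma fgen2_2 (q : ℕ) : fgen2 q 2 = Multiplicative.ofAdd 1 := rfl

lemma hrel1 (q : ℕ) (hq : 1 ≤ q) : ∀ r ∈ TprimeRels q, FreeGroup.lift fgen1 r = 1 := by
  intro r hr
  rcases hr with h | h | h | h | h | h <;> subst h <;>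
    simp only [map_mul, map_pow, map_inv, FreeGroup.lift_apply_of, fgen1_0, fgen1_1, fgen1_2]
  · decide
  · decide
  · decide
  · have h3 : 3 ^ q = 3 * 3 ^ (q - 1) := by rw [← pow_succ']; congr 1; omega
    rw [h3, pow_mul, show WU ^ 3 = 1 by decide, one_pow]
  · decide
  · decide

lemma hrel2 (q : ℕ) : ∀ r ∈ TprimeRels q, FreeGroup.lift (fgen2 q) r = 1 := by
  intro r hr
  rcases hr with h | h | h | h | h | h <;> subst h <;>
    simp only [map_mul, map_pow, map_inv, FreeGroup.lift_apply_of, fgen2_0, fgen2_1, fgen2_2]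
  · simp
  · simp
  · simp
  · rw [← ofAdd_nsmul, nsmul_eq_mul, mul_one]
    simp [ZMod.natCast_self]
  · simp
  · simp

def phi1 (q : ℕ) (hq : 1 ≤ q) : Tprime q →* M3ˣ := PresentedGroup.toGroup (hrel1 q hq)
def phi2 (q : ℕ) : Tprime q →* Multiplicative (ZMod (3 ^ q)) := PresentedGroup.toGroup (hrel2 q)

@[simp] lemma phi1_b (q : ℕ) (hq : 1 ≤ q) : phi1 q hq (Tprime.b q) = BU := PresentedGroup.toGroup.of _
@[simp] lemma phi1_a (q : ℕ) (hq : 1 ≤ q) : phi1 q hq (Tprime.a q) = AU := PresentedGroup.toGroup.of _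
@[simp] lemma phi1_w (q : ℕ) (hq : 1 ≤ q) : phi1 q hq (Tprime.w q) = WU := PresentedGroup.toGroup.of _
@[simp] lemma phi2_b (q : ℕ) : phi2 q (Tprime.b q) = 1 := PresentedGroup.toGroup.of _
@[simp] lemma phi2_a (q : ℕ) : phi2 q (Tprime.a q) = 1 := PresentedGroup.toGroup.of _
@[simp] lemma phi2_w (q : ℕ) : phi2 q (Tprime.w q) = Multiplicative.ofAdd 1 := PresentedGroup.toGroup.of _

end NFAux

namespace NFAux

lemma relmk (q : ℕ) {r : FreeGroup (Fin 3)} (hr : r ∈ TprimeRels q) :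
    PresentedGroup.mk (TprimeRels q) r = 1 :=
  (QuotientGroup.eq_one_iff r).mpr (Subgroup.subset_normalClosure hr)

lemma ha2 (q : ℕ) : Tprime.a q ^ 2 = Tprime.b q ^ 2 := by
  have h := relmk q (show _ ∈ TprimeRels q from Or.inl rfl)
  simp only [map_mul, map_pow, map_inv] at h
  exact mul_inv_eq_one.mp h

lemma habab (q : ℕ) : (Tprime.a q * Tprime.b q) ^ 2 = Tprime.a q ^ 2 := by
  have h := relmk q (show _ ∈ TprimeRels q from Or.inr (Or.inl rfl))
  simp only [map_mul, map_pow, map_inv] at h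
  exact (mul_inv_eq_one.mp h).symm

lemma ha4 (q : ℕ) : Tprime.a q ^ 4 = 1 := by
  have h := relmk q (show _ ∈ TprimeRels q from Or.inr (Or.inr (Or.inl rfl)))
  rw [map_pow] at h
  exact h

lemma hw3q (q : ℕ) : Tprime.w q ^ (3 ^ q) = 1 := by
  have h := relmk q (show _ ∈ TprimeRels q from Or.inr (Or.inr (Or.inr (Or.inl rfl))))
  rw [map_pow] at h
  exact h

lemma hwa (q : ℕ) : Tprime.w q * Tprime.a q = Tprime.b q * Tprime.w q := by
  have h := relmk q (show _ ∈ TprimeRels q from Or.inr (Or.inr (Or.inr (Or.inr (Or.inl rfl)))))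
  simp only [map_mul, map_inv] at h
  exact mul_inv_eq_one.mp h

lemma hwb (q : ℕ) : Tprime.w q * Tprime.b q = Tprime.a q * Tprime.b q * Tprime.w q := by
  have h := relmk q
    (show _ ∈ TprimeRels q from Or.inr (Or.inr (Or.inr (Or.inr (Or.inr rfl)))))
  simp only [map_mul, map_inv] at h
  exact mul_inv_eq_one.mp h

lemma hb4 (q : ℕ) : Tprime.b q ^ 4 = 1 := by
  rw [show (4:ℕ) = 2*2 from rfl, pow_mul, ← ha2, ← pow_mul]
  exact ha4 q

lemma hab (q : ℕ) : Tprime.a q * Tprime.b q = (Tprime.b q)⁻¹ * Tprime.a q := by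
  have h := habab q
  rw [pow_two, pow_two, mul_assoc] at h
  rw [eq_inv_mul_iff_mul_eq]
  exact mul_left_cancel h

section
variable (q : ℕ)
local notation "B" => Tprime.b q
local notation "A" => Tprime.a q
local notation "W" => Tprime.w q

lemma hbinv : B⁻¹ = B * (B * B) := by
  have h := hb4 q
  rw [show (4:ℕ) = 3+1 from rfl, pow_succ] at h
  rw [← eq_inv_of_mul_eq_one_left h]
  simp [pow_succ, mul_assoc]

lemma hab' (x : Tprime q) : A * (B * x) = B * (B * (B * (A * x))) := by
  rw [← mul_assoc, hab, hbinv, mul_assoc]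
  simp only [mul_assoc]

lemma hab2 : A * B = B * (B * (B * A)) := by
  have := hab' q 1; simpa using this

lemma ha2' (x : Tprime q) : A * (A * x) = B * (B * x) := by
  rw [← mul_assoc, ← pow_two, ha2, pow_two, mul_assoc]

lemma ha22 : A * A = B * B := by
  have := ha2' q 1; simpa using this

lemma hwa' (x : Tprime q) : W * (A * x) = B * (W * x) := by
  rw [← mul_assoc, hwa, mul_assoc]

lemma hwa2 : W * A = B * W := hwa q

lemma hwb' (x : Tprime q) : W * (B * x) = A * (B * (W * x)) := by
  rw [← mul_assoc, hwb, mul_assoc, mul_assoc]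

lemma hwb2 : W * B = A * (B * W) := by rw [hwb, mul_assoc]

lemma hb4' (x : Tprime q) : B * (B * (B * (B * x))) = x := by
  have h := hb4 q
  calc B * (B * (B * (B * x))) = B^4 * x := by simp [pow_succ, mul_assoc]
  _ = x := by rw [h, one_mul]

lemma hb42 : B * (B * (B * B)) = 1 := by
  have := hb4' q 1; simpa using this

lemma apush : ∀ s : Fin 4, ∀ e : Fin 2, ∃ s' : Fin 4, ∃ e' : Fin 2,
    A * (B ^ (s:ℕ) * A ^ (e:ℕ)) = B ^ ((s':ℕ)) * A ^ ((e':ℕ)) := by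
  have tac : True := trivial
  intro s e
  fin_cases s <;> fin_cases e
  · exact ⟨⟨0, by norm_num⟩, ⟨1, by norm_num⟩, by norm_num⟩
  · refine ⟨⟨2, by norm_num⟩, ⟨0, by norm_num⟩, ?_⟩
    simp only [Fin.mk_zero, Fin.mk_one, Fin.val_mk, pow_succ, pow_zero, one_mul, mul_one,
      mul_assoc]
    simp only [hab' q, hab2 q, ha2' q, ha22 q, hb4' q, hb42 q, mul_one, one_mul]
  · refine ⟨⟨3, by norm_num⟩, ⟨1, by norm_num⟩, ?_⟩
    simp only [Fin.mk_zero, Fin.mk_one, Fin.val_mk, pow_succ, pow_zero, one_mul, mul_one,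
      mul_assoc]
    simp only [hab' q, hab2 q, ha2' q, ha22 q, hb4' q, hb42 q, mul_one, one_mul]
  · refine ⟨⟨1, by norm_num⟩, ⟨0, by norm_num⟩, ?_⟩
    simp only [Fin.mk_zero, Fin.mk_one, Fin.val_mk, pow_succ, pow_zero, one_mul, mul_one,
      mul_assoc]
    simp only [hab' q, hab2 q, ha2' q, ha22 q, hb4' q, hb42 q, mul_one, one_mul]
  · refine ⟨⟨2, by norm_num⟩, ⟨1, by norm_num⟩, ?_⟩
    simp only [Fin.mk_zero, Fin.mk_one, Fin.val_mk, pow_succ, pow_zero, one_mul, mul_one,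
      mul_assoc]
    simp only [hab' q, hab2 q, ha2' q, ha22 q, hb4' q, hb42 q, mul_one, one_mul]
  · refine ⟨⟨0, by norm_num⟩, ⟨0, by norm_num⟩, ?_⟩
    simp only [Fin.mk_zero, Fin.mk_one, Fin.val_mk, pow_succ, pow_zero, one_mul, mul_one,
      mul_assoc]
    simp only [hab' q, hab2 q, ha2' q, ha22 q, hb4' q, hb42 q, mul_one, one_mul]
  · refine ⟨⟨1, by norm_num⟩, ⟨1, by norm_num⟩, ?_⟩
    simp only [Fin.mk_zero, Fin.mk_one, Fin.val_mk, pow_succ, pow_zero, one_mul, mul_one,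
      mul_assoc]
    simp only [hab' q, hab2 q, ha2' q, ha22 q, hb4' q, hb42 q, mul_one, one_mul]
  · refine ⟨⟨3, by norm_num⟩, ⟨0, by norm_num⟩, ?_⟩
    simp only [Fin.mk_zero, Fin.mk_one, Fin.val_mk, pow_succ, pow_zero, one_mul, mul_one,
      mul_assoc]
    simp only [hab' q, hab2 q, ha2' q, ha22 q, hb4' q, hb42 q, mul_one, one_mul]

lemma wpush : ∀ s : Fin 4, ∀ e : Fin 2, ∃ s' : Fin 4, ∃ e' : Fin 2,
    W * (B ^ (s:ℕ) * A ^ (e:ℕ)) = B ^ ((s':ℕ)) * (A ^ ((e':ℕ)) * W) := by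
  intro s e
  fin_cases s <;> fin_cases e
  · exact ⟨⟨0, by norm_num⟩, ⟨0, by norm_num⟩, by norm_num⟩
  · refine ⟨⟨1, by norm_num⟩, ⟨0, by norm_num⟩, ?_⟩
    simp only [Fin.mk_zero, Fin.mk_one, Fin.val_mk, pow_succ, pow_zero, one_mul, mul_one,
      mul_assoc]
    simp only [hwa' q, hwb' q, hwa2 q, hwb2 q, hab' q, hab2 q, ha2' q, ha22 q, hb4' q, hb42 q,
      mul_one, one_mul]
  · refine ⟨⟨3, by norm_num⟩, ⟨1, by norm_num⟩, ?_⟩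
    simp only [Fin.mk_zero, Fin.mk_one, Fin.val_mk, pow_succ, pow_zero, one_mul, mul_one,
      mul_assoc]
    simp only [hwa' q, hwb' q, hwa2 q, hwb2 q, hab' q, hab2 q, ha2' q, ha22 q, hb4' q, hb42 q,
      mul_one, one_mul]
  · refine ⟨⟨2, by norm_num⟩, ⟨1, by norm_num⟩, ?_⟩
    simp only [Fin.mk_zero, Fin.mk_one, Fin.val_mk, pow_succ, pow_zero, one_mul, mul_one,
      mul_assoc]
    simp only [hwa' q, hwb' q, hwa2 q, hwb2 q, hab' q, hab2 q, ha2' q, ha22 q, hb4' q, hb42 q,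
      mul_one, one_mul]
  · refine ⟨⟨2, by norm_num⟩, ⟨0, by norm_num⟩, ?_⟩
    simp only [Fin.mk_zero, Fin.mk_one, Fin.val_mk, pow_succ, pow_zero, one_mul, mul_one,
      mul_assoc]
    simp only [hwa' q, hwb' q, hwa2 q, hwb2 q, hab' q, hab2 q, ha2' q, ha22 q, hb4' q, hb42 q,
      mul_one, one_mul]
  · refine ⟨⟨3, by norm_num⟩, ⟨0, by norm_num⟩, ?_⟩
    simp only [Fin.mk_zero, Fin.mk_one, Fin.val_mk, pow_succ, pow_zero, one_mul, mul_one,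
      mul_assoc]
    simp only [hwa' q, hwb' q, hwa2 q, hwb2 q, hab' q, hab2 q, ha2' q, ha22 q, hb4' q, hb42 q,
      mul_one, one_mul]
  · refine ⟨⟨1, by norm_num⟩, ⟨1, by norm_num⟩, ?_⟩
    simp only [Fin.mk_zero, Fin.mk_one, Fin.val_mk, pow_succ, pow_zero, one_mul, mul_one,
      mul_assoc]
    simp only [hwa' q, hwb' q, hwa2 q, hwb2 q, hab' q, hab2 q, ha2' q, ha22 q, hb4' q, hb42 q,
      mul_one, one_mul]
  · refine ⟨⟨0, by norm_num⟩, ⟨1, by norm_num⟩, ?_⟩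
    simp only [Fin.mk_zero, Fin.mk_one, Fin.val_mk, pow_succ, pow_zero, one_mul, mul_one,
      mul_assoc]
    simp only [hwa' q, hwb' q, hwa2 q, hwb2 q, hab' q, hab2 q, ha2' q, ha22 q, hb4' q, hb42 q,
      mul_one, one_mul]

lemma bstep (s : Fin 4) (x : Tprime q) :
    B * (B ^ (s:ℕ) * x) = B ^ (((1 + s : Fin 4)):ℕ) * x := by
  rw [← mul_assoc, ← pow_succ']
  have hv : ((1 + s : Fin 4) : ℕ) = (1 + s.val) % 4 := by
    rw [Fin.val_add]
    norm_num
  rw [hv, ← pow_eq_pow_mod _ (hb4 q), Nat.add_comm 1 (s:ℕ)]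

lemma wstep (hq : 1 ≤ q) (t : Fin (3 ^ q)) :
    W * W ^ (t:ℕ) = W ^ (((1 + t : Fin (3 ^ q))):ℕ) := by
  haveI : NeZero (3 ^ q) := ⟨pow_ne_zero _ (by norm_num)⟩
  rw [← pow_succ']
  have h1 : (1 : Fin (3 ^ q)).val = 1 := by
    have h3 : 1 < 3 ^ q := Nat.one_lt_pow (by omega) (by norm_num)
    rw [Fin.val_one']
    exact Nat.mod_eq_of_lt h3
  have hv : ((1 + t : Fin (3 ^ q)) : ℕ) = (1 + t.val) % 3 ^ q := by
    rw [Fin.val_add, h1]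
  rw [hv, ← pow_eq_pow_mod _ (hw3q q), Nat.add_comm 1 (t:ℕ)]

end

lemma key_distinct : ∀ s s' : Fin 4, ∀ e e' : Fin 2,
    BU ^ (s : ℕ) * AU ^ (e : ℕ) = BU ^ (s' : ℕ) * AU ^ (e' : ℕ) → s = s' ∧ e = e' := by decide

end NFAux

/-- Every element of `T'_{8·3^q}` is uniquely of the form `b^s a^ε w^t` with `0 ≤ s < 4`,
`ε ∈ {0,1}`, `0 ≤ t < 3^q` (i.e. of the form `b^s w^t` or `b^s a w^t`); in particular the
group has order `8·3^q`. -/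
theorem normalForm_Tprime (q : ℕ) (hq : 1 ≤ q) :
    (∀ g : Tprime q, ∃! p : Fin 4 × Fin 2 × Fin (3 ^ q),
        g = Tprime.b q ^ (p.1 : ℕ) * Tprime.a q ^ (p.2.1 : ℕ) * Tprime.w q ^ (p.2.2 : ℕ)) ∧
      Nat.card (Tprime q) = 8 * 3 ^ q := by
  classical
  haveI : NeZero (3 ^ q) := ⟨pow_ne_zero _ (by norm_num)⟩
  set f : Fin 4 × Fin 2 × Fin (3 ^ q) → Tprime q :=
    fun p => Tprime.b q ^ (p.1 : ℕ) * Tprime.a q ^ (p.2.1 : ℕ) * Tprime.w q ^ (p.2.2 : ℕ)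
    with hf
  -- injectivity
  have hinj : Function.Injective f := by
    rintro ⟨s, e, t⟩ ⟨s', e', t'⟩ h
    simp only [hf] at h
    have h2 := congrArg (NFAux.phi2 q) h
    simp only [map_mul, map_pow, NFAux.phi2_b, NFAux.phi2_a, NFAux.phi2_w, one_pow, one_mul]
      at h2
    have ht : t = t' := by
      have h3 := congrArg Multiplicative.toAdd h2
      simp only [toAdd_pow, toAdd_ofAdd, nsmul_eq_mul, mul_one] at h3
      have hv := congrArg ZMod.val h3
      rw [ZMod.val_cast_of_lt t.isLt, ZMod.val_cast_of_lt t'.isLt] at hv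
      exact Fin.ext hv
    have h1 := congrArg (NFAux.phi1 q hq) h
    simp only [map_mul, map_pow, NFAux.phi1_b, NFAux.phi1_a, NFAux.phi1_w] at h1
    rw [ht] at h1
    have h4 : NFAux.BU ^ (s : ℕ) * NFAux.AU ^ (e : ℕ)
        = NFAux.BU ^ (s' : ℕ) * NFAux.AU ^ (e' : ℕ) := mul_right_cancel h1
    obtain ⟨hs, he⟩ := NFAux.key_distinct s s' e e' h4
    simp [hs, he, ht]
  -- surjectivity
  have h1T : (1 : Tprime q) ∈ Set.range f := ⟨(0, 0, 0), by simp [hf]⟩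
  have hbT : ∀ {h : Tprime q}, h ∈ Set.range f → Tprime.b q * h ∈ Set.range f := by
    rintro h ⟨⟨s, e, t⟩, rfl⟩
    refine ⟨(1 + s, e, t), ?_⟩
    simp only [hf, mul_assoc]
    exact (NFAux.bstep q s _).symm
  have haT : ∀ {h : Tprime q}, h ∈ Set.range f → Tprime.a q * h ∈ Set.range f := by
    rintro h ⟨⟨s, e, t⟩, rfl⟩
    obtain ⟨s', e', hse⟩ := NFAux.apush q s e
    refine ⟨(s', e', t), ?_⟩
    simp only [hf, mul_assoc]
    have h5 : Tprime.a q * (Tprime.b q ^ (s:ℕ) * (Tprime.a q ^ (e:ℕ) * Tprime.w q ^ (t:ℕ)))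
        = (Tprime.a q * (Tprime.b q ^ (s:ℕ) * Tprime.a q ^ (e:ℕ))) * Tprime.w q ^ (t:ℕ) := by
      simp only [mul_assoc]
    rw [h5, hse, mul_assoc]
  have hwT : ∀ {h : Tprime q}, h ∈ Set.range f → Tprime.w q * h ∈ Set.range f := by
    rintro h ⟨⟨s, e, t⟩, rfl⟩
    obtain ⟨s', e', hse⟩ := NFAux.wpush q s e
    refine ⟨(s', e', 1 + t), ?_⟩
    simp only [hf, mul_assoc]
    have h5 : Tprime.w q * (Tprime.b q ^ (s:ℕ) * (Tprime.a q ^ (e:ℕ) * Tprime.w q ^ (t:ℕ)))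
        = (Tprime.w q * (Tprime.b q ^ (s:ℕ) * Tprime.a q ^ (e:ℕ))) * Tprime.w q ^ (t:ℕ) := by
      simp only [mul_assoc]
    rw [h5, hse]
    simp only [mul_assoc]
    rw [NFAux.wstep q hq t]
  have hpowT : ∀ (x : Tprime q), (∀ {h : Tprime q}, h ∈ Set.range f → x * h ∈ Set.range f) →
      ∀ n : ℕ, ∀ h ∈ Set.range f, x ^ n * h ∈ Set.range f := by
    intro x hx n
    induction n with
    | zero => intro h hh; simpa using hh
    | succ n ih =>
      intro h hh
      rw [pow_succ', mul_assoc]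
      exact hx (ih h hh)
  have hinvT : ∀ (x : Tprime q) (n : ℕ), 0 < n → x ^ n = 1 →
      (∀ {h : Tprime q}, h ∈ Set.range f → x * h ∈ Set.range f) →
      ∀ h ∈ Set.range f, x⁻¹ * h ∈ Set.range f := by
    intro x n hn hxn hx h hh
    have hx1 : x ^ (n - 1) * x = 1 := by
      rw [← pow_succ]
      have : n - 1 + 1 = n := by omega
      rw [this, hxn]
    rw [← eq_inv_of_mul_eq_one_left hx1]
    exact hpowT x hx (n - 1) h hh
  have hgen : ∀ z : FreeGroup (Fin 3), ∀ h ∈ Set.range f,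
      PresentedGroup.mk (TprimeRels q) z * h ∈ Set.range f := by
    intro z
    refine FreeGroup.induction_on
      (C := fun z => ∀ h ∈ Set.range f, PresentedGroup.mk (TprimeRels q) z * h ∈ Set.range f)
      z ?_ ?_ ?_ ?_
    · intro h hh; simpa using hh
    · intro x h hh
      fin_cases x
      · exact hbT hh
      · exact haT hh
      · exact hwT hh
    · intro x _ h hh
      rw [map_inv]
      fin_cases x
      · exact hinvT (Tprime.b q) 4 (by norm_num) (NFAux.hb4 q) hbT h hh
      · exact hinvT (Tprime.a q) 4 (by norm_num) (NFAux.ha4 q) haT h hh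
      · exact hinvT (Tprime.w q) (3 ^ q) (by positivity) (NFAux.hw3q q) hwT h hh
    · intro x y hx hy h hh
      rw [map_mul, mul_assoc]
      exact hx _ (hy _ hh)
  have hsurj : Function.Surjective f := by
    intro g
    induction g using PresentedGroup.induction_on with
    | H z =>
      have := hgen z 1 h1T
      simpa using this
  constructor
  · intro g
    obtain ⟨p, hp⟩ := hsurj g
    exact ⟨p, hp.symm, fun p' hp' => (hinj (hp.trans hp')).symm⟩
  · have e := Equiv.ofBijective f ⟨hinj, hsurj⟩
    rw [← Nat.card_congr e]
    simp only [Nat.card_eq_fintype_card, Fintype.card_prod, Fintype.card_fin]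
    ring
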